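/- Let 0 < r < 1 and let A = {z ∈ ℂ : r < |z| < 1} be an annulus. Then every automorphism φ of A is of the form φ(z) = λz or φ(z) = λr/z for some λ ∈ ℂ with |λ| = 1. Consequently Aut(A) consists of two copies of the unit circle and in particular is compact: for any X ∈ A, the orbit {φ(X) : φ ∈ Aut(A)} has no accumulation point on ∂A. -/

import Mathlib

open Set Complex Metric

noncomputable section

/-- `f` is a holomorphic automorphism of the domain `Ω`. -/
def IsAutomorphismOf (Ω : Set ℂ) (f : ℂ → ℂ) : Prop :=
  ∃ g : ℂ → ℂ, MapsTo f Ω Ω ∧ MapsTo g Ω Ω ∧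
    DifferentiableOn ℂ f Ω ∧ DifferentiableOn ℂ g Ω ∧
    EqOn (g ∘ f) id Ω ∧ EqOn (f ∘ g) id Ω

lemma isPreconnected_annulus (a b : ℝ) (ha : 0 ≤ a) :
    IsPreconnected {z : ℂ | a < norm z ∧ norm z < b} := by
  have himg : {z : ℂ | a < norm z ∧ norm z < b} =
      (fun p : ℝ × ℝ => (p.1 : ℂ) * Complex.exp (p.2 * Complex.I)) '' (Ioo a b ×ˢ univ) := by
    ext z
    constructor
    · rintro ⟨h1, h2⟩
      exact ⟨(norm z, Complex.arg z), ⟨⟨h1, h2⟩, trivial⟩, Complex.norm_mul_exp_arg_mul_I z⟩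
    · rintro ⟨⟨ρ, θ⟩, ⟨⟨h1, h2⟩, -⟩, rfl⟩
      have : norm ((ρ : ℂ) * Complex.exp (θ * Complex.I)) = |ρ| := by
        simp [Complex.norm_exp, norm_mul]
      rw [mem_setOf_eq, this, _root_.abs_of_nonneg (le_trans ha h1.le)]
      exact ⟨h1, h2⟩
  rw [himg]
  apply IsPreconnected.image
  · exact (isPreconnected_Ioo.prod isPreconnected_univ)
  · apply Continuous.continuousOn
    exact (Complex.continuous_ofReal.comp continuous_fst).mul
      ((Complex.continuous_exp).comp ((Complex.continuous_ofReal.comp continuous_snd).mul continuous_const))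

lemma key_max {r : ℝ} (hr0 : 0 < r) (hr1 : r < 1) {g : ℂ → ℂ}
    (hg : DifferentiableOn ℂ g {z : ℂ | r < norm z ∧ norm z < 1})
    (hb : ∀ ε : ℝ, 0 < ε → ∃ δ, 0 < δ ∧ ∀ z : ℂ, r < norm z → norm z < 1 →
      (norm z < r + δ ∨ 1 - δ < norm z) → norm (g z) ≤ 1 + ε) :
    ∀ z : ℂ, r < norm z → norm z < 1 → norm (g z) ≤ 1 := by
  intro z₀ hz₀r hz₀1
  refine le_of_forall_pos_le_add ?_
  intro ε hε
  obtain ⟨δ, hδ, hcol⟩ := hb ε hε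
  set s : ℝ := r + min δ (norm z₀ - r) / 2 with hs
  set t : ℝ := 1 - min δ (1 - norm z₀) / 2 with ht
  have hm1 : 0 < min δ (norm z₀ - r) := lt_min hδ (by linarith)
  have hm2 : 0 < min δ (1 - norm z₀) := lt_min hδ (by linarith)
  have hrs : r < s := by simp only [hs]; linarith
  have hsz : s < norm z₀ := by
    have : min δ (norm z₀ - r) ≤ norm z₀ - r := min_le_right _ _
    simp only [hs]; linarith
  have hzt : norm z₀ < t := by
    have : min δ (1 - norm z₀) ≤ 1 - norm z₀ := min_le_right _ _
    simp only [ht]; linarith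
  have ht1 : t < 1 := by simp only [ht]; linarith
  have hsδ : s < r + δ := by
    have : min δ (norm z₀ - r) ≤ δ := min_le_left _ _
    simp only [hs]; linarith
  have htδ : 1 - δ < t := by
    have : min δ (1 - norm z₀) ≤ δ := min_le_left _ _
    simp only [ht]; linarith
  set U : Set ℂ := {z : ℂ | s < norm z ∧ norm z < t} with hU
  have hUA : U ⊆ {z : ℂ | r < norm z ∧ norm z < 1} := by
    rintro z ⟨h1, h2⟩; exact ⟨hrs.trans h1, h2.trans ht1⟩
  have hUopen : IsOpen U := by
    have : U = norm ⁻¹' (Ioo s t) := rfl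
    rw [this]; exact isOpen_Ioo.preimage continuous_norm
  have hclU : closure U ⊆ {z : ℂ | r < norm z ∧ norm z < 1} := by
    intro z hz
    have : z ∈ norm ⁻¹' (closure (Ioo s t)) :=
      (continuous_norm.closure_preimage_subset _) hz
    rw [closure_Ioo (ne_of_lt (hsz.trans hzt))] at this
    exact ⟨hrs.trans_le this.1, lt_of_le_of_lt this.2 ht1⟩
  have hbdd : Bornology.IsBounded U := by
    apply (Metric.isBounded_ball (x := (0:ℂ)) (r := 1)).subset
    intro z hz
    simpa [Complex.dist_eq] using hz.2.trans ht1
  have hdc : DiffContOnCl ℂ g U := by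
    refine ⟨hg.mono hUA, (hg.continuousOn).mono hclU⟩
  have hfr : ∀ w ∈ frontier U, ‖g w‖ ≤ 1 + ε := by
    intro w hw
    have hwcl : w ∈ closure U := hw.1
    have hw1 : r < norm w ∧ norm w < 1 := hclU hwcl
    have hwnU : w ∉ U := by
      intro hwU
      exact hw.2 (by rwa [hUopen.interior_eq])
    have hwst : norm w ≤ s ∨ t ≤ norm w := by
      by_contra h
      push_neg at h
      exact hwnU ⟨h.1, h.2⟩
    refine hcol w hw1.1 hw1.2 ?_
    rcases hwst with h | h
    · exact Or.inl (lt_of_le_of_lt h hsδ)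
    · exact Or.inr (lt_of_lt_of_le htδ h)
  have := Complex.norm_le_of_forall_mem_frontier_norm_le hbdd hdc hfr
    (subset_closure (⟨hsz, hzt⟩ : z₀ ∈ U))
  simpa using this

lemma annulus_proper {r : ℝ} (hr0 : 0 < r) (hr1 : r < 1) {φ ψ : ℂ → ℂ}
    (hmφ : MapsTo φ {z : ℂ | r < norm z ∧ norm z < 1}
      {z : ℂ | r < norm z ∧ norm z < 1})
    (hmψ : MapsTo ψ {z : ℂ | r < norm z ∧ norm z < 1}
      {z : ℂ | r < norm z ∧ norm z < 1})
    (hψ : DifferentiableOn ℂ ψ {z : ℂ | r < norm z ∧ norm z < 1})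
    (hinv : EqOn (ψ ∘ φ) id {z : ℂ | r < norm z ∧ norm z < 1}) :
    ∀ ε : ℝ, 0 < ε → ∃ δ, 0 < δ ∧ ∀ z : ℂ, r < norm z → norm z < 1 →
      (norm z < r + δ ∨ 1 - δ < norm z) →
      (norm (φ z) < r + ε ∨ 1 - ε < norm (φ z)) := by
  intro ε hε
  set A : Set ℂ := {z : ℂ | r < norm z ∧ norm z < 1} with hAdef
  have hAopen : IsOpen A := by
    have : A = norm ⁻¹' (Ioo r 1) := rfl
    rw [this]; exact isOpen_Ioo.preimage continuous_norm
  set K : Set ℂ := {z : ℂ | z ∈ A ∧ r + ε ≤ norm (φ z) ∧ norm (φ z) ≤ 1 - ε}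
    with hKdef
  -- key claim: closure K ⊆ A
  have hclK : closure K ⊆ A := by
    intro p hp
    obtain ⟨u, hu, hulim⟩ := mem_closure_iff_seq_limit.mp hp
    set T : Set ℂ := norm ⁻¹' (Icc (r + ε) (1 - ε)) with hT
    have hTc : IsCompact T := by
      refine IsCompact.of_isClosed_subset (isCompact_closedBall (0:ℂ) (1 - ε))
        (isClosed_Icc.preimage continuous_norm) ?_
      intro w hw
      simpa [Complex.dist_eq] using hw.2
    have hwT : ∀ n, φ (u n) ∈ T := fun n => ⟨(hu n).2.1, (hu n).2.2⟩
    obtain ⟨w₀, hw₀T, σ, hσ, hσlim⟩ := hTc.tendsto_subseq hwT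
    have hw₀A : w₀ ∈ A := by
      constructor
      · exact lt_of_lt_of_le (by linarith) hw₀T.1
      · exact lt_of_le_of_lt hw₀T.2 (by linarith)
    have hψc : ContinuousAt ψ w₀ :=
      (hψ.continuousOn.continuousAt (hAopen.mem_nhds hw₀A))
    have h1 : Filter.Tendsto (fun n => ψ (φ (u (σ n)))) Filter.atTop (nhds (ψ w₀)) :=
      hψc.tendsto.comp hσlim
    have h2 : ∀ n, ψ (φ (u (σ n))) = u (σ n) := fun n => hinv (hu (σ n)).1
    have h3 : Filter.Tendsto (fun n => u (σ n)) Filter.atTop (nhds p) :=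
      hulim.comp hσ.tendsto_atTop
    have h1' : Filter.Tendsto (fun n => u (σ n)) Filter.atTop (nhds (ψ w₀)) := by
      refine h1.congr fun n => h2 n
    have : p = ψ w₀ := tendsto_nhds_unique h3 h1'
    rw [this]
    exact hmψ hw₀A
  -- now use compactness to extract δ
  by_cases hKe : K = ∅
  · refine ⟨1, one_pos, fun z h1 h2 _ => ?_⟩
    have hzK : z ∉ K := by rw [hKe]; exact notMem_empty z
    rw [hKdef, mem_setOf_eq, not_and, not_and_or, not_le, not_le] at hzK
    exact hzK ⟨h1, h2⟩
  · have hKne : (closure K).Nonempty := (nonempty_iff_ne_empty.mpr hKe).closure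
    have hScomp : IsCompact (closure K) := by
      refine (isCompact_closedBall (0:ℂ) 1).of_isClosed_subset isClosed_closure ?_
      refine closure_minimal ?_ (Metric.isClosed_closedBall)
      intro z hz
      simpa [Complex.dist_eq] using (hz.1.2).le
    obtain ⟨zm, hzmS, hzm⟩ := hScomp.exists_isMinOn hKne (continuous_norm.continuousOn)
    obtain ⟨zM, hzMS, hzM⟩ := hScomp.exists_isMaxOn hKne (continuous_norm.continuousOn)
    have hm : r < norm zm := (hclK hzmS).1
    have hM : norm zM < 1 := (hclK hzMS).2
    refine ⟨min (norm zm - r) (1 - norm zM),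
      lt_min (by linarith) (by linarith), fun z h1 h2 hcol => ?_⟩
    by_contra hcon
    push_neg at hcon
    have hzK : z ∈ K := ⟨⟨h1, h2⟩, hcon.1, hcon.2⟩
    have hzS := subset_closure hzK
    have hlo : norm zm ≤ norm z := hzm hzS
    have hhi : norm z ≤ norm zM := hzM hzS
    rcases hcol with h | h
    · have : min (norm zm - r) (1 - norm zM) ≤ norm zm - r :=
        min_le_left _ _
      linarith
    · have : min (norm zm - r) (1 - norm zM) ≤ 1 - norm zM :=
        min_le_right _ _
      linarith

lemma refine_hi {r ε₀ : ℝ} (hr1 : r < 1) (hε₀ : ε₀ = (1 - r) / 4) {φ : ℂ → ℂ}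
    {P : ℝ → ℂ → Prop}
    (hmono : ∀ δ' δ : ℝ, ∀ z : ℂ, δ' ≤ δ → P δ' z → P δ z)
    (hPcol : ∀ δ : ℝ, ∀ z : ℂ, P δ z → (norm z < r + δ ∨ 1 - δ < norm z))
    (hprop : ∀ ε : ℝ, 0 < ε → ∃ δ, 0 < δ ∧ ∀ z : ℂ, r < norm z → norm z < 1 →
      (norm z < r + δ ∨ 1 - δ < norm z) →
      (norm (φ z) < r + ε ∨ 1 - ε < norm (φ z)))
    {δ₁ : ℝ} (hδ₁ : 0 < δ₁)
    (hbase : ∀ z : ℂ, r < norm z → norm z < 1 → P δ₁ z →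
      1 - ε₀ < norm (φ z)) :
    ∀ ε : ℝ, 0 < ε → ∃ δ, 0 < δ ∧ ∀ z : ℂ, r < norm z → norm z < 1 → P δ z →
      1 - ε < norm (φ z) := by
  subst hε₀
  intro ε hε
  obtain ⟨δ₂, hδ₂, h2⟩ := hprop (min ε ((1 - r) / 4)) (lt_min hε (by linarith))
  refine ⟨min δ₂ δ₁, lt_min hδ₂ hδ₁, fun z h1 hz2 hP => ?_⟩
  have hb := hbase z h1 hz2 (hmono _ _ z (min_le_right _ _) hP)
  have hminε : min ε ((1 - r) / 4) ≤ ε := min_le_left _ _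
  have hminε₀ : min ε ((1 - r) / 4) ≤ (1 - r) / 4 := min_le_right _ _
  rcases h2 z h1 hz2 (hPcol _ _ (hmono _ _ z (min_le_left _ _) hP)) with h | h
  · linarith
  · linarith

lemma refine_lo {r ε₀ : ℝ} (hr1 : r < 1) (hε₀ : ε₀ = (1 - r) / 4) {φ : ℂ → ℂ}
    {P : ℝ → ℂ → Prop}
    (hmono : ∀ δ' δ : ℝ, ∀ z : ℂ, δ' ≤ δ → P δ' z → P δ z)
    (hPcol : ∀ δ : ℝ, ∀ z : ℂ, P δ z → (norm z < r + δ ∨ 1 - δ < norm z))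
    (hprop : ∀ ε : ℝ, 0 < ε → ∃ δ, 0 < δ ∧ ∀ z : ℂ, r < norm z → norm z < 1 →
      (norm z < r + δ ∨ 1 - δ < norm z) →
      (norm (φ z) < r + ε ∨ 1 - ε < norm (φ z)))
    {δ₁ : ℝ} (hδ₁ : 0 < δ₁)
    (hbase : ∀ z : ℂ, r < norm z → norm z < 1 → P δ₁ z →
      norm (φ z) < r + ε₀) :
    ∀ ε : ℝ, 0 < ε → ∃ δ, 0 < δ ∧ ∀ z : ℂ, r < norm z → norm z < 1 → P δ z →
      norm (φ z) < r + ε := by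
  subst hε₀
  intro ε hε
  obtain ⟨δ₂, hδ₂, h2⟩ := hprop (min ε ((1 - r) / 4)) (lt_min hε (by linarith))
  refine ⟨min δ₂ δ₁, lt_min hδ₂ hδ₁, fun z h1 hz2 hP => ?_⟩
  have hb := hbase z h1 hz2 (hmono _ _ z (min_le_right _ _) hP)
  have hminε : min ε ((1 - r) / 4) ≤ ε := min_le_left _ _
  have hminε₀ : min ε ((1 - r) / 4) ≤ (1 - r) / 4 := min_le_right _ _
  rcases h2 z h1 hz2 (hPcol _ _ (hmono _ _ z (min_le_left _ _) hP)) with h | h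
  · linarith
  · linarith

lemma unimodular_const {r : ℝ} (hr0 : 0 < r) (hr1 : r < 1) {g : ℂ → ℂ}
    (hgd : DifferentiableOn ℂ g {z : ℂ | r < norm z ∧ norm z < 1})
    (hne : ∀ z : ℂ, r < norm z → norm z < 1 → g z ≠ 0)
    (hb : ∀ ε : ℝ, 0 < ε → ε < 1 → ∃ δ, 0 < δ ∧ ∀ z : ℂ, r < norm z → norm z < 1 →
      (norm z < r + δ ∨ 1 - δ < norm z) →
      (1 - ε ≤ norm (g z) ∧ norm (g z) ≤ 1 + ε)) :
    ∃ lam : ℂ, norm lam = 1 ∧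
      ∀ z : ℂ, r < norm z → norm z < 1 → g z = lam := by
  have hupper : ∀ z : ℂ, r < norm z → norm z < 1 → norm (g z) ≤ 1 := by
    refine key_max hr0 hr1 hgd fun ε hε => ?_
    obtain ⟨δ, hδ, h⟩ := hb (min ε (1/2)) (lt_min hε (by norm_num)) (by
      have : min ε (1/2) ≤ 1/2 := min_le_right _ _
      linarith)
    refine ⟨δ, hδ, fun z h1 h2 h3 => ?_⟩
    have := (h z h1 h2 h3).2
    have hm : min ε (1/2) ≤ ε := min_le_left _ _
    linarith
  have hlower : ∀ z : ℂ, r < norm z → norm z < 1 →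
      norm ((g z)⁻¹) ≤ 1 := by
    refine key_max hr0 hr1 (hgd.inv (fun z hz => hne z hz.1 hz.2)) fun ε hε => ?_
    have hε' : 0 < ε / (1 + ε) := by positivity
    have hε'1 : ε / (1 + ε) < 1 := by
      rw [div_lt_one (by linarith)]; linarith
    obtain ⟨δ, hδ, h⟩ := hb (ε / (1 + ε)) hε' hε'1
    refine ⟨δ, hδ, fun z h1 h2 h3 => ?_⟩
    have hg1 : 1 - ε / (1 + ε) ≤ norm (g z) := (h z h1 h2 h3).1
    have hkey : 1 - ε / (1 + ε) = 1 / (1 + ε) := by field_simp; ring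
    rw [hkey] at hg1
    have hpos : (0:ℝ) < 1 / (1 + ε) := by positivity
    rw [norm_inv]
    calc (norm (g z))⁻¹ ≤ (1 / (1 + ε))⁻¹ := by
          exact inv_anti₀ hpos hg1
      _ = 1 + ε := by field_simp
  have heq : ∀ z : ℂ, r < norm z → norm z < 1 → norm (g z) = 1 := by
    intro z h1 h2
    have h3 := hupper z h1 h2
    have h4 := hlower z h1 h2
    rw [norm_inv] at h4
    have h5 : 0 < norm (g z) := by
      simpa using (norm_pos_iff.mpr (hne z h1 h2))
    have h6 : 1 ≤ norm (g z) := by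
      nlinarith [mul_le_of_le_one_left h5.le h4, mul_inv_cancel₀ (ne_of_gt h5)]
    linarith
  set c : ℂ := (((1 + r) / 2 : ℝ) : ℂ) with hc
  have hcabs : norm c = (1 + r) / 2 := by
    rw [hc, Complex.norm_real, Real.norm_eq_abs, abs_of_pos (by linarith)]
  have hcA : c ∈ {z : ℂ | r < norm z ∧ norm z < 1} := by
    rw [mem_setOf_eq, hcabs]; constructor <;> linarith
  have hAopen : IsOpen {z : ℂ | r < norm z ∧ norm z < 1} := by
    have : {z : ℂ | r < norm z ∧ norm z < 1} = norm ⁻¹' (Ioo r 1) := rfl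
    rw [this]; exact isOpen_Ioo.preimage continuous_norm
  have hmax : IsMaxOn (norm ∘ g) {z : ℂ | r < norm z ∧ norm z < 1} c := by
    rw [isMaxOn_iff]
    intro z hz
    simp only [Function.comp_apply]
    rw [heq z hz.1 hz.2, heq c hcA.1 hcA.2]
  have := Complex.eqOn_of_isPreconnected_of_isMaxOn_norm
    (isPreconnected_annulus r 1 hr0.le) hAopen hgd hcA hmax
  exact ⟨g c, heq c hcA.1 hcA.2, fun z h1 h2 => this ⟨h1, h2⟩⟩

set_option maxHeartbeats 2000000 in
lemma classify_aut {r : ℝ} (hr0 : 0 < r) (hr1 : r < 1) {φ ψ : ℂ → ℂ}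
    (hmφ : MapsTo φ {z : ℂ | r < norm z ∧ norm z < 1}
      {z : ℂ | r < norm z ∧ norm z < 1})
    (hmψ : MapsTo ψ {z : ℂ | r < norm z ∧ norm z < 1}
      {z : ℂ | r < norm z ∧ norm z < 1})
    (hφ : DifferentiableOn ℂ φ {z : ℂ | r < norm z ∧ norm z < 1})
    (hψ : DifferentiableOn ℂ ψ {z : ℂ | r < norm z ∧ norm z < 1})
    (hinv : EqOn (ψ ∘ φ) id {z : ℂ | r < norm z ∧ norm z < 1}) :
    ∃ lam : ℂ, norm lam = 1 ∧
      ((∀ z : ℂ, r < norm z → norm z < 1 → φ z = lam * z) ∨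
       (∀ z : ℂ, r < norm z → norm z < 1 → φ z = lam * (r : ℂ) / z)) := by
  set A : Set ℂ := {z : ℂ | r < norm z ∧ norm z < 1} with hAdef
  have hprop := annulus_proper hr0 hr1 hmφ hmψ hψ hinv
  have hφA : ∀ z : ℂ, r < norm z → norm z < 1 →
      r < norm (φ z) ∧ norm (φ z) < 1 := fun z h1 h2 => hmφ ⟨h1, h2⟩
  have hzne : ∀ z : ℂ, r < norm z → z ≠ 0 := by
    intro z h1 h0
    rw [h0] at h1; simp at h1; linarith
  have hφne : ∀ z : ℂ, r < norm z → norm z < 1 → φ z ≠ 0 := by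
    intro z h1 h2
    exact hzne _ (hφA z h1 h2).1
  -- dichotomy at each boundary component
  obtain ⟨δ₀, hδ₀, h₀⟩ := hprop ((1 - r) / 4) (by linarith)
  set δ₁ : ℝ := min δ₀ ((1 - r) / 4) with hδ₁def
  have hδ₁ : 0 < δ₁ := lt_min hδ₀ (by linarith)
  have hδ₁le : δ₁ ≤ (1 - r) / 4 := min_le_right _ _
  have hδ₁le' : δ₁ ≤ δ₀ := min_le_left _ _
  have houtd : (∀ z : ℂ, r < norm z → norm z < 1 → 1 - δ₁ < norm z →
        norm (φ z) < r + (1 - r) / 4) ∨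
      (∀ z : ℂ, r < norm z → norm z < 1 → 1 - δ₁ < norm z →
        1 - (1 - r) / 4 < norm (φ z)) := by
    set C : Set ℂ := {z : ℂ | 1 - δ₁ < norm z ∧ norm z < 1} with hC
    have hCA : C ⊆ A := by
      rintro z ⟨h1, h2⟩
      exact ⟨by linarith, h2⟩
    have hconn : IsPreconnected ((fun z => norm (φ z)) '' C) := by
      refine IsPreconnected.image (isPreconnected_annulus _ _ (by linarith)) _ ?_
      exact (continuous_norm.comp_continuousOn (hφ.continuousOn.mono hCA))
    have hsub : (fun z => norm (φ z)) '' C ⊆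
        Iio (r + (1 - r) / 4) ∪ Ioi (1 - (1 - r) / 4) := by
      rintro x ⟨z, hz, rfl⟩
      have hzA := hCA hz
      rcases h₀ z hzA.1 hzA.2 (Or.inr (by have := hz.1; linarith)) with h | h
      · exact Or.inl h
      · exact Or.inr h
    have hdisj : Disjoint (Iio (r + (1 - r) / 4)) (Ioi (1 - (1 - r) / 4)) := by
      rw [Set.disjoint_left]
      intro x hx1 hx2
      simp only [mem_Iio, mem_Ioi] at hx1 hx2
      linarith
    rcases hconn.subset_or_subset isOpen_Iio isOpen_Ioi hdisj hsub with h | h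
    · exact Or.inl fun z h1 h2 h3 => h ⟨z, ⟨h3, h2⟩, rfl⟩
    · exact Or.inr fun z h1 h2 h3 => h ⟨z, ⟨h3, h2⟩, rfl⟩
  have hind : (∀ z : ℂ, r < norm z → norm z < 1 → norm z < r + δ₁ →
        norm (φ z) < r + (1 - r) / 4) ∨
      (∀ z : ℂ, r < norm z → norm z < 1 → norm z < r + δ₁ →
        1 - (1 - r) / 4 < norm (φ z)) := by
    set C : Set ℂ := {z : ℂ | r < norm z ∧ norm z < r + δ₁} with hC
    have hCA : C ⊆ A := by
      rintro z ⟨h1, h2⟩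
      exact ⟨h1, by linarith⟩
    have hconn : IsPreconnected ((fun z => norm (φ z)) '' C) := by
      refine IsPreconnected.image (isPreconnected_annulus _ _ (by linarith)) _ ?_
      exact (continuous_norm.comp_continuousOn (hφ.continuousOn.mono hCA))
    have hsub : (fun z => norm (φ z)) '' C ⊆
        Iio (r + (1 - r) / 4) ∪ Ioi (1 - (1 - r) / 4) := by
      rintro x ⟨z, hz, rfl⟩
      have hzA := hCA hz
      rcases h₀ z hzA.1 hzA.2 (Or.inl (by have := hz.2; linarith)) with h | h
      · exact Or.inl h
      · exact Or.inr h
    have hdisj : Disjoint (Iio (r + (1 - r) / 4)) (Ioi (1 - (1 - r) / 4)) := by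
      rw [Set.disjoint_left]
      intro x hx1 hx2
      simp only [mem_Iio, mem_Ioi] at hx1 hx2
      linarith
    rcases hconn.subset_or_subset isOpen_Iio isOpen_Ioi hdisj hsub with h | h
    · exact Or.inl fun z h1 h2 h3 => h ⟨z, ⟨h1, h3⟩, rfl⟩
    · exact Or.inr fun z h1 h2 h3 => h ⟨z, ⟨h1, h3⟩, rfl⟩
  -- refinement setup
  have hmono_out : ∀ δ' δ : ℝ, ∀ z : ℂ, δ' ≤ δ →
      (1 - δ' < norm z) → (1 - δ < norm z) := by
    intro δ' δ z h h'; linarith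
  have hmono_in : ∀ δ' δ : ℝ, ∀ z : ℂ, δ' ≤ δ →
      (norm z < r + δ') → (norm z < r + δ) := by
    intro δ' δ z h h'; linarith
  have hcol_out : ∀ δ : ℝ, ∀ z : ℂ, (1 - δ < norm z) →
      (norm z < r + δ ∨ 1 - δ < norm z) := fun δ z h => Or.inr h
  have hcol_in : ∀ δ : ℝ, ∀ z : ℂ, (norm z < r + δ) →
      (norm z < r + δ ∨ 1 - δ < norm z) := fun δ z h => Or.inl h
  have hcabs : norm (((1 + r) / 2 : ℝ) : ℂ) = (1 + r) / 2 := by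
    rw [Complex.norm_real, Real.norm_eq_abs, abs_of_pos (by linarith)]
  have hc1 : r < norm (((1 + r) / 2 : ℝ) : ℂ) := by rw [hcabs]; linarith
  have hc2 : norm (((1 + r) / 2 : ℝ) : ℂ) < 1 := by rw [hcabs]; linarith
  have hrC : ((r : ℂ)) ≠ 0 := by
    simp only [ne_eq, Complex.ofReal_eq_zero]; linarith
  have habsr : norm ((r : ℂ)) = r := by
    rw [Complex.norm_real, Real.norm_eq_abs, abs_of_pos hr0]
  rcases houtd with hout | hout <;> rcases hind with hin | hin
  · -- outer → r, inner → r : impossible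
    exfalso
    have houter := refine_lo (P := fun δ z => 1 - δ < norm z) hr1 rfl hmono_out
      hcol_out hprop hδ₁ hout
    have hinner := refine_lo (P := fun δ z => norm z < r + δ) hr1 rfl hmono_in
      hcol_in hprop hδ₁ hin
    have hb : ∀ ε : ℝ, 0 < ε → ε < 1 → ∃ δ, 0 < δ ∧ ∀ z : ℂ,
        r < norm z → norm z < 1 →
        (norm z < r + δ ∨ 1 - δ < norm z) →
        (1 - ε ≤ norm (φ z / (r : ℂ)) ∧ norm (φ z / (r : ℂ)) ≤ 1 + ε) := by
      intro ε hε hε1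
      obtain ⟨δo, hδo, ho⟩ := houter (r * ε) (by positivity)
      obtain ⟨δi, hδi, hi⟩ := hinner (r * ε) (by positivity)
      refine ⟨min δo δi, lt_min hδo hδi, fun z h1 h2 hcol => ?_⟩
      have haφ := hφA z h1 h2
      have haux : norm (φ z / (r : ℂ)) = norm (φ z) / r := by
        rw [norm_div, habsr]
      rw [haux]
      have hup : norm (φ z) < r + r * ε := by
        rcases hcol with h | h
        · exact hi z h1 h2 (lt_of_lt_of_le h (by
            have := min_le_right δo δi; linarith))
        · exact ho z h1 h2 (lt_of_le_of_lt (by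
            have := min_le_left δo δi; linarith) h)
      constructor
      · rw [le_div_iff₀ hr0]; nlinarith [haφ.1]
      · rw [div_le_iff₀ hr0]; nlinarith
    obtain ⟨lam, hlam, hg⟩ := unimodular_const hr0 hr1
      (g := fun z => φ z / (r : ℂ))
      (hφ.div_const _)
      (fun z h1 h2 => div_ne_zero (hφne z h1 h2) hrC) hb
    have hgc : φ (((1 + r) / 2 : ℝ) : ℂ) / (r : ℂ) = lam := hg _ hc1 hc2
    have habs : norm (φ (((1 + r) / 2 : ℝ) : ℂ)) / r = 1 := by
      have h' := congrArg norm hgc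
      rwa [norm_div, habsr, hlam] at h'
    have h1 := (hφA _ hc1 hc2).1
    rw [div_eq_one_iff_eq (ne_of_gt hr0)] at habs
    linarith
  · -- outer → r, inner → 1 : inversion
    have houter := refine_lo (P := fun δ z => 1 - δ < norm z) hr1 rfl hmono_out
      hcol_out hprop hδ₁ hout
    have hinner := refine_hi (P := fun δ z => norm z < r + δ) hr1 rfl hmono_in
      hcol_in hprop hδ₁ hin
    have hb : ∀ ε : ℝ, 0 < ε → ε < 1 → ∃ δ, 0 < δ ∧ ∀ z : ℂ,
        r < norm z → norm z < 1 →
        (norm z < r + δ ∨ 1 - δ < norm z) →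
        (1 - ε ≤ norm (φ z * z / (r : ℂ)) ∧ norm (φ z * z / (r : ℂ)) ≤ 1 + ε) := by
      intro ε hε hε1
      obtain ⟨δo, hδo, ho⟩ := houter (r * ε) (by positivity)
      obtain ⟨δi, hδi, hi⟩ := hinner (r * ε) (by positivity)
      refine ⟨min (min δo δi) (min (r * ε) ε), by positivity, fun z h1 h2 hcol => ?_⟩
      have haφ := hφA z h1 h2
      have haux : norm (φ z * z / (r : ℂ)) = norm (φ z) * norm z / r := by
        rw [norm_div, norm_mul, habsr]
      rw [haux]
      have hδ1 : min (min δo δi) (min (r * ε) ε) ≤ δo := le_trans (min_le_left _ _) (min_le_left _ _)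
      have hδ2 : min (min δo δi) (min (r * ε) ε) ≤ δi := le_trans (min_le_left _ _) (min_le_right _ _)
      have hδ3 : min (min δo δi) (min (r * ε) ε) ≤ r * ε := le_trans (min_le_right _ _) (min_le_left _ _)
      have hδ4 : min (min δo δi) (min (r * ε) ε) ≤ ε := le_trans (min_le_right _ _) (min_le_right _ _)
      rcases hcol with h | h
      · -- inner collar : |φ z| > 1 - rε
        have hφlo := hi z h1 h2 (by linarith)
        constructor
        · rw [le_div_iff₀ hr0]; nlinarith
        · rw [div_le_iff₀ hr0]; nlinarith
      · -- outer collar : |φ z| < r + rε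
        have hφhi := ho z h1 h2 (by linarith)
        constructor
        · rw [le_div_iff₀ hr0]; nlinarith [haφ.1]
        · rw [div_le_iff₀ hr0]; nlinarith [haφ.1]
    obtain ⟨lam, hlam, hg⟩ := unimodular_const hr0 hr1
      (g := fun z => φ z * z / (r : ℂ))
      ((hφ.mul differentiableOn_id).div_const _)
      (fun z h1 h2 => div_ne_zero (mul_ne_zero (hφne z h1 h2) (hzne z h1)) hrC) hb
    refine ⟨lam, hlam, Or.inr fun z h1 h2 => ?_⟩
    have hz0 := hzne z h1
    have hgz : φ z * z / (r : ℂ) = lam := hg z h1 h2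
    rw [div_eq_iff hrC] at hgz
    rw [eq_div_iff hz0]
    linear_combination hgz
  · -- outer → 1, inner → r : rotation
    have houter := refine_hi (P := fun δ z => 1 - δ < norm z) hr1 rfl hmono_out
      hcol_out hprop hδ₁ hout
    have hinner := refine_lo (P := fun δ z => norm z < r + δ) hr1 rfl hmono_in
      hcol_in hprop hδ₁ hin
    have hb : ∀ ε : ℝ, 0 < ε → ε < 1 → ∃ δ, 0 < δ ∧ ∀ z : ℂ,
        r < norm z → norm z < 1 →
        (norm z < r + δ ∨ 1 - δ < norm z) →
        (1 - ε ≤ norm (φ z / z) ∧ norm (φ z / z) ≤ 1 + ε) := by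
      intro ε hε hε1
      obtain ⟨δo, hδo, ho⟩ := houter (r * ε) (by positivity)
      obtain ⟨δi, hδi, hi⟩ := hinner (r * ε) (by positivity)
      refine ⟨min (min δo δi) (min (r * ε) (ε / (1 + ε))), by positivity,
        fun z h1 h2 hcol => ?_⟩
      have haφ := hφA z h1 h2
      have haux : norm (φ z / z) = norm (φ z) / norm z := norm_div _ _
      rw [haux]
      have hzpos : 0 < norm z := by linarith
      have hδ1 : min (min δo δi) (min (r * ε) (ε / (1 + ε))) ≤ δo :=
        le_trans (min_le_left _ _) (min_le_left _ _)
      have hδ2 : min (min δo δi) (min (r * ε) (ε / (1 + ε))) ≤ δi :=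
        le_trans (min_le_left _ _) (min_le_right _ _)
      have hδ3 : min (min δo δi) (min (r * ε) (ε / (1 + ε))) ≤ r * ε :=
        le_trans (min_le_right _ _) (min_le_left _ _)
      have hδ4 : min (min δo δi) (min (r * ε) (ε / (1 + ε))) ≤ ε / (1 + ε) :=
        le_trans (min_le_right _ _) (min_le_right _ _)
      have hδ4' : min (min δo δi) (min (r * ε) (ε / (1 + ε))) * (1 + ε) ≤ ε := by
        rw [← le_div_iff₀ (by linarith)]
        exact hδ4
      rcases hcol with h | h
      · -- inner collar : |φ z| < r + rε
        have hφhi := hi z h1 h2 (by linarith)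
        constructor
        · rw [le_div_iff₀ hzpos]; nlinarith [haφ.1]
        · rw [div_le_iff₀ hzpos]; nlinarith [haφ.1]
      · -- outer collar : |φ z| > 1 - rε
        have hφlo := ho z h1 h2 (by linarith)
        constructor
        · rw [le_div_iff₀ hzpos]; nlinarith
        · rw [div_le_iff₀ hzpos]; nlinarith
    obtain ⟨lam, hlam, hg⟩ := unimodular_const hr0 hr1
      (g := fun z => φ z / z)
      (hφ.div differentiableOn_id (fun z hz => hzne z hz.1))
      (fun z h1 h2 => div_ne_zero (hφne z h1 h2) (hzne z h1)) hb
    refine ⟨lam, hlam, Or.inl fun z h1 h2 => ?_⟩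
    have hz0 := hzne z h1
    have hgz : φ z / z = lam := hg z h1 h2
    rw [div_eq_iff hz0] at hgz
    exact hgz
  · -- outer → 1, inner → 1 : impossible
    exfalso
    have houter := refine_hi (P := fun δ z => 1 - δ < norm z) hr1 rfl hmono_out
      hcol_out hprop hδ₁ hout
    have hinner := refine_hi (P := fun δ z => norm z < r + δ) hr1 rfl hmono_in
      hcol_in hprop hδ₁ hin
    have hb : ∀ ε : ℝ, 0 < ε → ε < 1 → ∃ δ, 0 < δ ∧ ∀ z : ℂ,
        r < norm z → norm z < 1 →
        (norm z < r + δ ∨ 1 - δ < norm z) →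
        (1 - ε ≤ norm (φ z) ∧ norm (φ z) ≤ 1 + ε) := by
      intro ε hε hε1
      obtain ⟨δo, hδo, ho⟩ := houter ε hε
      obtain ⟨δi, hδi, hi⟩ := hinner ε hε
      refine ⟨min δo δi, lt_min hδo hδi, fun z h1 h2 hcol => ?_⟩
      have haφ := hφA z h1 h2
      have hlo : 1 - ε < norm (φ z) := by
        rcases hcol with h | h
        · exact hi z h1 h2 (lt_of_lt_of_le h (by
            have := min_le_right δo δi; linarith))
        · exact ho z h1 h2 (lt_of_le_of_lt (by
            have := min_le_left δo δi; linarith) h)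
      exact ⟨hlo.le, by linarith [haφ.2]⟩
    obtain ⟨lam, hlam, hg⟩ := unimodular_const hr0 hr1 (g := φ) hφ hφne hb
    have hgc := hg _ hc1 hc2
    have habs : norm (φ (((1 + r) / 2 : ℝ) : ℂ)) = 1 := by
      rw [hgc, hlam]
    have h2 := (hφA _ hc1 hc2).2
    linarith

/-- Every automorphism of the annulus `A = {r < |z| < 1}` is a rotation `z ↦ λz` or an
inversion `z ↦ λr/z` with `|λ| = 1`; consequently `Aut(A)` is compact and no
automorphism orbit accumulates at the boundary of `A`. -/
theorem automorphisms_of_annulus (r : ℝ) (hr0 : 0 < r) (hr1 : r < 1)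
    (A : Set ℂ) (hA : A = {z : ℂ | r < ‖z‖ ∧ ‖z‖ < 1}) :
    (∀ φ, IsAutomorphismOf A φ →
      ∃ lam : ℂ, ‖lam‖ = 1 ∧
        (EqOn φ (fun z => lam * z) A ∨ EqOn φ (fun z => lam * (r : ℂ) / z) A)) ∧
    (∀ X ∈ A, ∀ P ∈ frontier A,
      P ∉ closure {w : ℂ | ∃ φ, IsAutomorphismOf A φ ∧ w = φ X}) := by
  subst hA
  have part1 : ∀ φ, IsAutomorphismOf {z : ℂ | r < norm z ∧ norm z < 1} φ →
      ∃ lam : ℂ, norm lam = 1 ∧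
        (EqOn φ (fun z => lam * z) {z : ℂ | r < norm z ∧ norm z < 1} ∨
         EqOn φ (fun z => lam * (r : ℂ) / z) {z : ℂ | r < norm z ∧ norm z < 1}) := by
    intro φ hφaut
    obtain ⟨ψ, h1, h2, h3, h4, h5, _⟩ := hφaut
    obtain ⟨lam, hlam, hcase⟩ := classify_aut hr0 hr1 h1 h2 h3 h4 h5
    refine ⟨lam, hlam, ?_⟩
    rcases hcase with h | h
    · exact Or.inl fun z hz => h z hz.1 hz.2
    · exact Or.inr fun z hz => h z hz.1 hz.2
  refine ⟨part1, ?_⟩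
  intro X hX P hP hPcl
  set a : ℝ := norm X with ha
  have haX : r < a ∧ a < 1 := hX
  have ha0 : 0 < a := lt_trans hr0 haX.1
  have hXne : X ≠ 0 := by
    intro h0
    rw [h0] at ha
    simp at ha
    linarith [haX.1, ha]
  -- the orbit is contained in a compact sub-annulus
  have horb : {w : ℂ | ∃ φ, IsAutomorphismOf {z : ℂ | r < norm z ∧ norm z < 1} φ
        ∧ w = φ X} ⊆
      norm ⁻¹' (Icc (min a (r / a)) (max a (r / a))) := by
    rintro w ⟨φ, hφaut, rfl⟩
    obtain ⟨lam, hlam, hcase⟩ := part1 φ hφaut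
    rcases hcase with h | h
    · have : norm (φ X) = a := by
        rw [h hX, norm_mul, hlam, one_mul]
      rw [mem_preimage, this]
      exact ⟨min_le_left _ _, le_max_left _ _⟩
    · have : norm (φ X) = r / a := by
        rw [h hX]
        rw [norm_div, norm_mul, hlam, one_mul, Complex.norm_real, Real.norm_eq_abs, abs_of_pos hr0]
      rw [mem_preimage, this]
      exact ⟨min_le_right _ _, le_max_right _ _⟩
  have hclosed : IsClosed ((norm : ℂ → ℝ) ⁻¹' (Icc (min a (r / a)) (max a (r / a)))) :=
    isClosed_Icc.preimage continuous_norm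
  have hPD := hclosed.closure_subset_iff.mpr horb hPcl
  rw [mem_preimage, mem_Icc] at hPD
  -- bounds on the sub-annulus
  have hra : r < r / a := by
    rw [lt_div_iff₀ ha0]
    nlinarith [haX.2]
  have hra1 : r / a < 1 := by
    rw [div_lt_one ha0]
    exact haX.1
  have hmin : r < min a (r / a) := lt_min haX.1 hra
  have hmax : max a (r / a) < 1 := max_lt haX.2 hra1
  -- P is on the frontier, so |P| ≤ r or |P| ≥ 1
  have hAopen : IsOpen {z : ℂ | r < norm z ∧ norm z < 1} := by
    have : {z : ℂ | r < norm z ∧ norm z < 1} = norm ⁻¹' (Ioo r 1) := rfl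
    rw [this]; exact isOpen_Ioo.preimage continuous_norm
  have hPnA : P ∉ {z : ℂ | r < norm z ∧ norm z < 1} := by
    intro hPA
    exact hP.2 (by rwa [hAopen.interior_eq])
  rw [mem_setOf_eq, not_and_or, not_lt, not_lt] at hPnA
  rcases hPnA with h | h
  · linarith [hPD.1]
  · linarith [hPD.2]
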